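/- Let (η_1,…,η_N) be a centered complex Gaussian vector with (Hermitian positive definite) covariance matrix Σ, i.e. Σ_{jk} = E[η_j conj(η_k)], and let Λ be the maximal eigenvalue of Σ. Then for every θ with 0 ≤ θ < 2, E[∏_{j=1}^N |η_j|^{-θ}] ≤ (1/det Σ) · (Λ^{1 − θ/2} · Γ(1 − θ/2))^N. -/

import Mathlib

open MeasureTheory Real Matrix Set
open scoped ComplexOrder

lemma det_polar (p : ℝ × ℝ) :
    (LinearMap.toContinuousLinearMap ((Matrix.toLin (Module.Basis.finTwoProd ℝ) (Module.Basis.finTwoProd ℝ))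
      !![Real.cos p.2, -p.1 * Real.sin p.2; Real.sin p.2, p.1 * Real.cos p.2])).det = p.1 := by
  conv_rhs => rw [← one_mul p.1, ← Real.cos_sq_add_sin_sq p.2]
  simp only [neg_mul, LinearMap.det_toContinuousLinearMap, LinearMap.det_toLin,
    Matrix.det_fin_two_of, sub_neg_eq_add]
  ring

lemma integrable_aux {b θ : ℝ} (hb : 0 < b) (hθ : θ < 2) :
    Integrable (fun z : ℂ => ‖z‖ ^ (-θ) * Real.exp (-b * ‖z‖ ^ (2:ℕ))) := by
  rw [← (Complex.volume_preserving_equiv_real_prod.symm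
      Complex.measurableEquivRealProd).integrable_comp_emb
    (MeasurableEquiv.measurableEmbedding _)]
  set G : ℝ × ℝ → ℝ := (fun z : ℂ => ‖z‖ ^ (-θ) * Real.exp (-b * ‖z‖ ^ (2:ℕ))) ∘
    Complex.measurableEquivRealProd.symm with hG
  have h1 : Integrable G ↔ IntegrableOn G polarCoord.source := by
    unfold IntegrableOn
    rw [Measure.restrict_congr_set polarCoord_source_ae_eq_univ, Measure.restrict_univ]
  rw [h1, ← polarCoord.symm_image_target_eq_source,
    integrableOn_image_iff_integrableOn_abs_det_fderiv_smul volume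
      polarCoord.open_target.measurableSet
      (fun p _ => (hasFDerivAt_polarCoord_symm p).hasFDerivWithinAt)
      (polarCoord.symm.injOn) G]
  have key : IntegrableOn (fun p : ℝ × ℝ => (p.1 ^ (1 - θ) * Real.exp (-b * p.1 ^ 2)) * 1)
      (Ioi (0:ℝ) ×ˢ Ioo (-π) π) := by
    unfold IntegrableOn
    rw [show (volume : Measure (ℝ × ℝ)) = (volume : Measure ℝ).prod volume from rfl, ← Measure.prod_restrict]
    exact Integrable.mul_prod
      (integrableOn_rpow_mul_exp_neg_mul_sq hb (by linarith : (-1:ℝ) < 1 - θ))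
      (integrableOn_const measure_Ioo_lt_top.ne)
  rw [show polarCoord.target = Ioi (0:ℝ) ×ˢ Ioo (-π) π from polarCoord_target]
  refine key.congr_fun (fun p hp => ?_) (measurableSet_Ioi.prod measurableSet_Ioo)
  obtain ⟨hp1, hp2⟩ := hp
  simp only [mul_one, det_polar, det_fderivPolarCoordSymm, smul_eq_mul]
  have hnorm : ‖(Complex.measurableEquivRealProd.symm (polarCoord.symm p) : ℂ)‖ = p.1 := by
    have : (Complex.measurableEquivRealProd.symm (polarCoord.symm p) : ℂ)
        = Complex.polarCoord.symm p := rfl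
    rw [this, Complex.norm_polarCoord_symm, abs_of_pos hp1]
  rw [hG]
  simp only [Function.comp_apply, hnorm]
  rw [abs_of_pos hp1]
  have h2 : p.1 ^ (1 - θ) = p.1 * p.1 ^ (-θ) := by
    rw [show (1:ℝ) - θ = 1 + (-θ) by ring, Real.rpow_add hp1, Real.rpow_one]
  rw [h2]; ring

lemma quad_bound {N : ℕ} {S : Matrix (Fin N) (Fin N) ℂ} (hS : S.PosDef) {Λ : ℝ}
    (hΛmax : ∀ i, hS.1.eigenvalues i ≤ Λ) (Z : Fin N → ℂ) :
    Λ⁻¹ * ∑ j, Complex.normSq (Z j) ≤ (star Z ⬝ᵥ (S⁻¹).mulVec Z).re := by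
  classical
  have hH := hS.1
  set U : Matrix (Fin N) (Fin N) ℂ := (hH.eigenvectorUnitary : Matrix (Fin N) (Fin N) ℂ) with hUdef
  set d : Fin N → ℂ := fun i => (((hH.eigenvalues i : ℝ) : ℂ))⁻¹ with hd
  have hUU : U * star U = 1 := by
    have := hH.eigenvectorUnitary.2
    rw [Unitary.mem_iff] at this
    exact this.2
  have hsUU : star U * U = 1 := by
    have := hH.eigenvectorUnitary.2
    rw [Unitary.mem_iff] at this
    exact this.1
  have hSinv : S⁻¹ = U * diagonal d * star U := by
    conv_lhs => rw [hH.spectral_theorem, Unitary.conjStarAlgAut_apply]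
    rw [Matrix.mul_inv_rev, Matrix.mul_inv_rev]
    have hDinv : (Matrix.diagonal (RCLike.ofReal ∘ hH.eigenvalues) : Matrix (Fin N) (Fin N) ℂ)⁻¹
        = Matrix.diagonal d := by
      refine Matrix.inv_eq_left_inv ?_
      rw [Matrix.diagonal_mul_diagonal, ← Matrix.diagonal_one]
      refine congrArg Matrix.diagonal (funext fun i => ?_)
      exact inv_mul_cancel₀ (Complex.ofReal_ne_zero.mpr (hS.eigenvalues_pos i).ne')
    rw [Matrix.inv_eq_left_inv hUU, Matrix.inv_eq_left_inv hsUU, hDinv, mul_assoc]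
  set w : Fin N → ℂ := star U *ᵥ Z with hwdef
  have hw : star w = star Z ᵥ* U := by
    rw [hwdef, star_mulVec]
    congr 1
    rw [← Matrix.star_eq_conjTranspose, star_star]
  have h1 : star Z ⬝ᵥ (S⁻¹).mulVec Z = ∑ j, d j * Complex.normSq (w j) := by
    rw [hSinv, ← Matrix.mulVec_mulVec, ← Matrix.mulVec_mulVec, Matrix.dotProduct_mulVec, ← hw]
    simp only [dotProduct, Matrix.mulVec_diagonal, Pi.star_apply]
    refine Finset.sum_congr rfl fun j _ => ?_
    rw [RCLike.star_def, mul_comm (d j) (w j), ← mul_assoc, mul_comm _ (w j),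
      Complex.mul_conj, mul_comm]
  have h2 : ∑ j, Complex.normSq (w j) = ∑ j, Complex.normSq (Z j) := by
    have e1 : star w ⬝ᵥ w = star Z ⬝ᵥ Z := by
      rw [hw, hwdef, Matrix.dotProduct_mulVec, Matrix.vecMul_vecMul, hUU, Matrix.vecMul_one]
    have e2 : ∀ v : Fin N → ℂ, star v ⬝ᵥ v = ((∑ j, Complex.normSq (v j) : ℝ) : ℂ) := by
      intro v
      simp only [dotProduct, Pi.star_apply, RCLike.star_def, Complex.ofReal_sum]
      exact Finset.sum_congr rfl fun j _ => by rw [mul_comm, Complex.mul_conj]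
    have := e1
    rw [e2 w, e2 Z] at this
    exact_mod_cast this
  have h3 : (star Z ⬝ᵥ (S⁻¹).mulVec Z).re = ∑ j, (hH.eigenvalues j)⁻¹ * Complex.normSq (w j) := by
    rw [h1, Complex.re_sum]
    refine Finset.sum_congr rfl fun j _ => ?_
    rw [hd]
    push_cast
    rw [← Complex.ofReal_inv, ← Complex.ofReal_mul, Complex.ofReal_re]
  rw [h3, ← h2, Finset.mul_sum]
  refine Finset.sum_le_sum fun j _ => ?_
  have hpos := hS.eigenvalues_pos j
  exact mul_le_mul_of_nonneg_right
    (inv_anti₀ hpos (hΛmax j)) (Complex.normSq_nonneg _)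

/-- For a centered complex Gaussian vector (η₁,…,η_N) with positive definite covariance
matrix S, whose joint density on ℂ^N is `(π^N det S)⁻¹ exp(−⟨S⁻¹Z, Z⟩)`, and maximal
eigenvalue Λ of S, for every 0 ≤ θ < 2,
`E[∏ⱼ |ηⱼ|^{-θ}] ≤ (det S)⁻¹ (Λ^{1−θ/2} Γ(1−θ/2))^N`. -/
theorem hole_prob_stmt_7 (N : ℕ) (hN : 1 ≤ N) (S : Matrix (Fin N) (Fin N) ℂ)
    (hS : S.PosDef) (Λ : ℝ)
    (hΛmax : ∀ i, hS.1.eigenvalues i ≤ Λ) (hΛmem : ∃ i, hS.1.eigenvalues i = Λ)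
    (θ : ℝ) (hθ0 : 0 ≤ θ) (hθ2 : θ < 2) :
    (∫ Z : Fin N → ℂ, (∏ j, ‖Z j‖ ^ (-θ)) *
        ((π ^ N * (S.det).re)⁻¹ * Real.exp (-(star Z ⬝ᵥ (S⁻¹).mulVec Z).re)))
      ≤ (1 / (S.det).re) * (Λ ^ (1 - θ / 2) * Real.Gamma (1 - θ / 2)) ^ N := by
  have hdet : 0 < (S.det).re := by
    have := hS.det_pos
    rw [Complex.lt_def] at this
    simpa using this.1
  have hΛpos : 0 < Λ := by
    obtain ⟨i, hi⟩ := hΛmem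
    rw [← hi]; exact hS.eigenvalues_pos i
  have hb : 0 < Λ⁻¹ := inv_pos.mpr hΛpos
  set c : ℝ := (π ^ N * (S.det).re)⁻¹ with hc
  have hc0 : 0 ≤ c := le_of_lt (inv_pos.mpr (by positivity))
  set h : ℂ → ℝ := fun z => ‖z‖ ^ (-θ) * Real.exp (-Λ⁻¹ * ‖z‖ ^ (2:ℕ)) with hh
  have hint : Integrable h := integrable_aux hb hθ2
  have hg : Integrable (fun Z : Fin N → ℂ => c * ∏ j, h (Z j)) :=
    (Integrable.fintype_prod (f := fun _ : Fin N => h) fun _ => hint).const_mul c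
  have hbound : ∀ Z : Fin N → ℂ,
      (∏ j, ‖Z j‖ ^ (-θ)) * (c * Real.exp (-(star Z ⬝ᵥ (S⁻¹).mulVec Z).re))
        ≤ c * ∏ j, h (Z j) := by
    intro Z
    have hexp : Real.exp (-(star Z ⬝ᵥ (S⁻¹).mulVec Z).re)
        ≤ ∏ j, Real.exp (-Λ⁻¹ * ‖Z j‖ ^ (2:ℕ)) := by
      rw [← Real.exp_sum]
      apply Real.exp_le_exp.mpr
      have hq := quad_bound hS hΛmax Z
      have hsum : ∑ x : Fin N, -Λ⁻¹ * ‖Z x‖ ^ (2:ℕ) = -(Λ⁻¹ * ∑ j, Complex.normSq (Z j)) := by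
        rw [Finset.mul_sum, ← Finset.sum_neg_distrib]
        refine Finset.sum_congr rfl fun j _ => ?_
        rw [Complex.normSq_eq_norm_sq]
        ring
      rw [hsum]
      exact neg_le_neg hq
    calc (∏ j, ‖Z j‖ ^ (-θ)) * (c * Real.exp (-(star Z ⬝ᵥ (S⁻¹).mulVec Z).re))
        ≤ (∏ j, ‖Z j‖ ^ (-θ)) * (c * ∏ j, Real.exp (-Λ⁻¹ * ‖Z j‖ ^ (2:ℕ))) := by
          apply mul_le_mul_of_nonneg_left (mul_le_mul_of_nonneg_left hexp hc0)
          exact Finset.prod_nonneg fun j _ => Real.rpow_nonneg (norm_nonneg _) _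
      _ = c * ∏ j, h (Z j) := by
          rw [hh]
          simp only
          rw [Finset.prod_mul_distrib]
          ring
  have hmono := integral_mono_of_nonneg (f := fun Z : Fin N → ℂ =>
      (∏ j, ‖Z j‖ ^ (-θ)) * (c * Real.exp (-(star Z ⬝ᵥ (S⁻¹).mulVec Z).re)))
    (g := fun Z : Fin N → ℂ => c * ∏ j, h (Z j))
    (ae_of_all _ fun Z => by positivity) hg (ae_of_all _ hbound)
  refine le_trans hmono ?_
  rw [integral_const_mul, integral_fintype_prod_volume_eq_pow (ι := Fin N) h, Fintype.card_fin]
  have hH : ∫ z : ℂ, h z = π * (Λ ^ (1 - θ/2) * Real.Gamma (1 - θ/2)) := by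
    have conv1 : ∫ z : ℂ, h z = ∫ z : ℂ, ‖z‖ ^ (-θ) * Real.exp (-Λ⁻¹ * ‖z‖ ^ (2:ℝ)) := by
      refine integral_congr_ae (ae_of_all _ fun z => ?_)
      rw [hh]; norm_num [Real.rpow_natCast]
    rw [conv1, Complex.integral_rpow_mul_exp_neg_mul_rpow one_le_two (by linarith) hb]
    rw [Real.inv_rpow hΛpos.le, ← Real.rpow_neg hΛpos.le]
    rw [show (-(-(-θ + 2) / 2) : ℝ) = 1 - θ/2 by ring,
        show ((-θ + 2) / 2 : ℝ) = 1 - θ/2 by ring]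
    ring
  rw [hH, hc]
  apply le_of_eq
  rw [mul_pow]
  field_simp
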